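/- arXiv:1407.2403 — 2 statements merged into one kernel-verified Lean document; each statement's English description precedes it below -/
import Mathlib

section
/- Let X be a Banach space with the Radon–Nikodym property (or assume all given paths are recovered by integrating their derivatives), let w : X → (0,∞) be a Lipschitz weight function, and let γ, λ : [0,1] → X be Lipschitz paths with γ(0) = λ(0), with ‖γ'(t)‖, ‖λ'(t)‖ ∈ [1/C, C] a.e. for some C > 0. If γ'(t)·w(γ(t)) = λ'(t)·w(λ(t)) for a.e. t, then γ = λ. -/
open MeasureTheory Set intervalIntegral

theorem stmt_8 {X : Type*} [NormedAddCommGroup X] [NormedSpace ℝ X] [CompleteSpace X]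
    (w : X → ℝ) (a : NNReal) (hw_lip : LipschitzWith a w) (hw_pos : ∀ x, 0 < w x)
    (γ lam : ℝ → X) (Kγ KL : NNReal)
    (hlipγ : LipschitzOnWith Kγ γ (Icc (0:ℝ) 1))
    (hlipL : LipschitzOnWith KL lam (Icc (0:ℝ) 1))
    (h0 : γ 0 = lam 0)
    -- the paths are recovered by integrating their derivatives (RNP):
    (hftcγ : ∀ t ∈ Icc (0:ℝ) 1, γ t = γ 0 + ∫ s in (0:ℝ)..t, deriv γ s)
    (hftcL : ∀ t ∈ Icc (0:ℝ) 1, lam t = lam 0 + ∫ s in (0:ℝ)..t, deriv lam s)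
    (C : ℝ) (hC : 0 < C)
    (hspeedγ : ∀ᵐ t ∂(volume.restrict (Icc (0:ℝ) 1)),
      1 / C ≤ ‖deriv γ t‖ ∧ ‖deriv γ t‖ ≤ C)
    (hspeedL : ∀ᵐ t ∂(volume.restrict (Icc (0:ℝ) 1)),
      1 / C ≤ ‖deriv lam t‖ ∧ ‖deriv lam t‖ ≤ C)
    (heq : ∀ᵐ t ∂(volume.restrict (Icc (0:ℝ) 1)),
      w (γ t) • deriv γ t = w (lam t) • deriv lam t) :
    ∀ t ∈ Icc (0:ℝ) 1, γ t = lam t := by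
  have hcγ : ContinuousOn γ (Icc (0:ℝ) 1) := hlipγ.continuousOn
  have hcL : ContinuousOn lam (Icc (0:ℝ) 1) := hlipL.continuousOn
  -- positive lower bound for w ∘ γ on [0,1]
  obtain ⟨t₀, ht₀, hmin⟩ := isCompact_Icc.exists_isMinOn (nonempty_Icc.2 zero_le_one)
    (hw_lip.continuous.comp_continuousOn hcγ)
  set m : ℝ := w (γ t₀) with hm
  have hm0 : 0 < m := hw_pos _
  set K : ℝ := a * C / m with hKdef
  have hK0 : 0 ≤ K := by positivity
  set M : ℝ := (Kγ : ℝ) + KL with hMdef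
  have hM0 : 0 ≤ M := by positivity
  set f : ℝ → ℝ := fun t => ‖γ t - lam t‖ with hfdef
  have hf_cont : ContinuousOn f (Icc (0:ℝ) 1) := (hcγ.sub hcL).norm
  -- integrability of the derivatives on [0,1]
  have hmeasγ : StronglyMeasurable (deriv γ) := stronglyMeasurable_deriv γ
  have hmeasL : StronglyMeasurable (deriv lam) := stronglyMeasurable_deriv lam
  have hintγ : IntegrableOn (deriv γ) (Icc (0:ℝ) 1) volume := by
    refine Integrable.mono' (g := fun _ => C) ?_ hmeasγ.aestronglyMeasurable ?_
    · exact integrableOn_const (by simp [Real.volume_Icc])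
    · filter_upwards [hspeedγ] with t ht using ht.2
  have hintL : IntegrableOn (deriv lam) (Icc (0:ℝ) 1) volume := by
    refine Integrable.mono' (g := fun _ => C) ?_ hmeasL.aestronglyMeasurable ?_
    · exact integrableOn_const (by simp [Real.volume_Icc])
    · filter_upwards [hspeedL] with t ht using ht.2
  -- a.e. bound on the difference of derivatives
  have hd : ∀ᵐ t ∂(volume.restrict (Icc (0:ℝ) 1)),
      ‖deriv γ t - deriv lam t‖ ≤ K * f t := by
    filter_upwards [heq, hspeedL, ae_restrict_mem measurableSet_Icc] with t ht hsp htmem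
    have hwγ : m ≤ w (γ t) := hmin htmem
    have hwγ0 : 0 < w (γ t) := hw_pos _
    have hne : w (γ t) ≠ 0 := ne_of_gt hwγ0
    have hder : deriv γ t - deriv lam t
        = ((w (lam t) - w (γ t)) / w (γ t)) • deriv lam t := by
      have h1 : deriv γ t = ((w (γ t))⁻¹ * w (lam t)) • deriv lam t := by
        rw [← smul_smul, ← ht, smul_smul, inv_mul_cancel₀ hne, one_smul]
      have h2 : ((w (γ t))⁻¹ * w (lam t)) • deriv lam t - deriv lam t
          = ((w (γ t))⁻¹ * w (lam t) - 1) • deriv lam t := by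
        rw [sub_smul, one_smul]
      rw [h1, h2]
      congr 1
      field_simp
    have hwdiff : |w (lam t) - w (γ t)| ≤ a * f t := by
      have := hw_lip.dist_le_mul (lam t) (γ t)
      rw [Real.dist_eq, dist_eq_norm] at this
      calc |w (lam t) - w (γ t)| ≤ a * ‖lam t - γ t‖ := this
        _ = a * f t := by rw [norm_sub_rev]
    calc ‖deriv γ t - deriv lam t‖
        = |w (lam t) - w (γ t)| / w (γ t) * ‖deriv lam t‖ := by
          rw [hder, norm_smul, Real.norm_eq_abs, abs_div, abs_of_pos hwγ0]
      _ ≤ (a * f t) / m * C := by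
          have h3 : |w (lam t) - w (γ t)| / w (γ t) ≤ (a * f t) / m :=
            div_le_div₀ (by positivity) hwdiff hm0 hwγ
          exact mul_le_mul h3 hsp.2 (norm_nonneg _) (by positivity)
      _ = K * f t := by rw [hKdef]; field_simp
  -- basic integral inequality
  have hint_sub : IntegrableOn (fun s => deriv γ s - deriv lam s) (Icc (0:ℝ) 1) volume :=
    hintγ.sub hintL
  have hsub : ∀ t ∈ Icc (0:ℝ) 1, Icc (0:ℝ) t ⊆ Icc (0:ℝ) 1 :=
    fun t ht => Icc_subset_Icc le_rfl ht.2
  have hii : ∀ t ∈ Icc (0:ℝ) 1, IntervalIntegrable (fun s => ‖deriv γ s - deriv lam s‖)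
      volume 0 t := by
    intro t ht
    apply IntegrableOn.intervalIntegrable
    rw [uIcc_of_le ht.1]
    exact (hint_sub.mono_set (hsub t ht)).norm
  have hfi : ∀ t ∈ Icc (0:ℝ) 1, IntervalIntegrable (fun s => K * f s) volume 0 t := by
    intro t ht
    apply ContinuousOn.intervalIntegrable
    rw [uIcc_of_le ht.1]
    exact continuousOn_const.mul (hf_cont.mono (hsub t ht))
  have hkey : ∀ t ∈ Icc (0:ℝ) 1, f t ≤ ∫ s in (0:ℝ)..t, K * f s := by
    intro t ht
    have hIγ : IntervalIntegrable (deriv γ) volume 0 t := by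
      apply IntegrableOn.intervalIntegrable
      rw [uIcc_of_le ht.1]; exact hintγ.mono_set (hsub t ht)
    have hIL : IntervalIntegrable (deriv lam) volume 0 t := by
      apply IntegrableOn.intervalIntegrable
      rw [uIcc_of_le ht.1]; exact hintL.mono_set (hsub t ht)
    have hdiff : γ t - lam t = ∫ s in (0:ℝ)..t, (deriv γ s - deriv lam s) := by
      rw [intervalIntegral.integral_sub hIγ hIL]
      rw [hftcγ t ht, hftcL t ht, h0]
      abel
    calc f t = ‖∫ s in (0:ℝ)..t, (deriv γ s - deriv lam s)‖ := by
          simp only [hfdef]; rw [hdiff]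
      _ ≤ ∫ s in (0:ℝ)..t, ‖deriv γ s - deriv lam s‖ :=
          intervalIntegral.norm_integral_le_integral_norm ht.1
      _ ≤ ∫ s in (0:ℝ)..t, K * f s := by
          refine intervalIntegral.integral_mono_ae_restrict ht.1 (hii t ht) (hfi t ht) ?_
          exact ae_mono (Measure.restrict_mono (hsub t ht) le_rfl) hd
  -- base bound
  have hbase : ∀ t ∈ Icc (0:ℝ) 1, f t ≤ M := by
    intro t ht
    have h1 : dist (γ t) (γ 0) ≤ Kγ * dist t 0 :=
      hlipγ.dist_le_mul t ht 0 (left_mem_Icc.2 zero_le_one)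
    have h2 : dist (lam t) (lam 0) ≤ KL * dist t 0 :=
      hlipL.dist_le_mul t ht 0 (left_mem_Icc.2 zero_le_one)
    have hdt : dist t 0 ≤ 1 := by
      rw [Real.dist_eq, sub_zero, abs_of_nonneg ht.1]; exact ht.2
    calc f t = ‖(γ t - γ 0) - (lam t - lam 0)‖ := by
          simp only [hfdef]; rw [h0]; congr 1; abel
      _ ≤ ‖γ t - γ 0‖ + ‖lam t - lam 0‖ := norm_sub_le _ _
      _ ≤ Kγ * dist t 0 + KL * dist t 0 := by
          rw [← dist_eq_norm, ← dist_eq_norm]; exact add_le_add h1 h2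
      _ ≤ Kγ * 1 + KL * 1 := by gcongr
      _ = M := by rw [hMdef]; ring
  -- iteration (Grönwall)
  have hiter : ∀ n : ℕ, ∀ t ∈ Icc (0:ℝ) 1, f t ≤ M * (K * t) ^ n / n.factorial := by
    intro n
    induction n with
    | zero => intro t ht; simpa using hbase t ht
    | succ n ih =>
      intro t ht
      have hrhs_int : IntervalIntegrable (fun s => K * (M * (K * s) ^ n / n.factorial))
          volume 0 t := by
        refine Continuous.intervalIntegrable ?_ 0 t
        exact continuous_const.mul
          ((continuous_const.mul ((continuous_const.mul continuous_id).pow n)).div_const _)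
      have step1 : f t ≤ ∫ s in (0:ℝ)..t, K * (M * (K * s) ^ n / n.factorial) := by
        refine le_trans (hkey t ht) ?_
        refine intervalIntegral.integral_mono_on ht.1 (hfi t ht) hrhs_int ?_
        intro s hs
        have hs1 : s ∈ Icc (0:ℝ) 1 := hsub t ht hs
        have := ih s hs1
        calc K * f s ≤ K * (M * (K * s) ^ n / n.factorial) := by gcongr
          _ = K * (M * (K * s) ^ n / n.factorial) := rfl
      have hcalc : (∫ s in (0:ℝ)..t, K * (M * (K * s) ^ n / n.factorial))
          = M * (K * t) ^ (n + 1) / (n + 1).factorial := by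
        have hrw : ∀ s : ℝ, K * (M * (K * s) ^ n / n.factorial)
            = (K ^ (n + 1) * M / n.factorial) * s ^ n := by
          intro s; rw [mul_pow]; ring
        simp only [hrw]
        rw [intervalIntegral.integral_const_mul, integral_pow]
        have hn : ((n : ℝ) + 1) ≠ 0 := by positivity
        have hfact : ((n.factorial : ℝ)) ≠ 0 := Nat.cast_ne_zero.2 n.factorial_ne_zero
        rw [Nat.factorial_succ, mul_pow]
        push_cast
        field_simp
        ring
      rw [← hcalc]; exact step1
  -- conclusion
  intro t ht
  have hlim : Filter.Tendsto (fun n : ℕ => M * (K * t) ^ n / n.factorial)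
      Filter.atTop (nhds 0) := by
    have := (FloorSemiring.tendsto_pow_div_factorial_atTop (K := ℝ) (K * t)).const_mul M
    simpa [mul_div_assoc] using this
  have hle : f t ≤ 0 := ge_of_tendsto' hlim (fun n => hiter n t ht)
  have hz : ‖γ t - lam t‖ = 0 := le_antisymm hle (norm_nonneg _)
  rwa [norm_eq_zero, sub_eq_zero] at hz
end

section
/- Let w : X → (0,∞) be a continuous weight on a metric space (or normed space) X, let γ : [0,1] → Ω be a w-geodesic from x₀ with r = d_w(x₀, γ(1)), where d_w is the inner metric induced by w. Then lim_{t→1⁻} d_{‖·‖}(γ(t), S_w(x₀, r)) / ‖γ(t) - γ(1)‖ = 1, i.e. geodesics meet the metric spheres they terminate on 'orthogonally' in this metric sense. -/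
open MeasureTheory Metric Set intervalIntegral Filter

variable {X : Type*} [NormedAddCommGroup X] [NormedSpace ℝ X]

/-- The `w`-weighted length of the restriction of a path `γ` to `[a,b]`. -/
noncomputable def wLengthOn (w : X → ℝ) (γ : ℝ → X) (a b : ℝ) : ℝ :=
  ∫ s in a..b, w (γ s) * ‖deriv γ s‖

/-- An admissible path in `Ω` joining `x` to `y`. -/
def IsWPath (Ω : Set X) (x y : X) (γ : ℝ → X) : Prop :=
  (∃ K : NNReal, LipschitzOnWith K γ (Icc (0:ℝ) 1)) ∧
  (∀ᵐ t ∂(volume.restrict (Icc (0:ℝ) 1)), DifferentiableAt ℝ γ t) ∧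
  (∀ t ∈ Icc (0:ℝ) 1, γ t = γ 0 + ∫ s in (0:ℝ)..t, deriv γ s) ∧
  γ 0 = x ∧ γ 1 = y ∧ (∀ t ∈ Icc (0:ℝ) 1, γ t ∈ Ω)

/-- The inner (pseudo)metric on `Ω` induced by the conformal weight `w`. -/
noncomputable def wDist (Ω : Set X) (w : X → ℝ) (x y : X) : ℝ :=
  sInf ((fun γ => wLengthOn w γ 0 1) '' {γ | IsWPath Ω x y γ})

/-- a.e. point of `[0,1]` (w.r.t. the restricted measure) lies in the open interval. -/
lemma ae_restrict_mem_Ioo :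
    ∀ᵐ s ∂(volume.restrict (Icc (0:ℝ) 1)), s ∈ Ioo (0:ℝ) 1 := by
  have h01 : ∀ᵐ s ∂(volume : Measure ℝ), s ≠ 0 ∧ s ≠ 1 := by
    have : (volume : Measure ℝ) ({0, 1} : Set ℝ) = 0 :=
      ((Set.finite_singleton (1:ℝ)).insert 0).countable.measure_zero _
    filter_upwards [measure_eq_zero_iff_ae_notMem.mp this] with s hs
    simp only [mem_insert_iff, mem_singleton_iff, not_or] at hs
    exact hs
  filter_upwards [ae_restrict_mem measurableSet_Icc,
    ae_mono Measure.restrict_le_self h01] with s hs h01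
  exact ⟨lt_of_le_of_ne hs.1 (Ne.symm h01.1), lt_of_le_of_ne hs.2 h01.2⟩

/-- The derivative of a Lipschitz-on-`[0,1]` function is bounded by the constant
at interior points. -/
lemma norm_deriv_le_of_lip {f : ℝ → X} {K : NNReal}
    (hf : LipschitzOnWith K f (Icc (0:ℝ) 1)) {s : ℝ} (hs : s ∈ Ioo (0:ℝ) 1) :
    ‖deriv f s‖ ≤ K :=
  norm_deriv_le_of_lipschitzOn (𝕜 := ℝ) (Icc_mem_nhds hs.1 hs.2) hf

lemma integrableOn_deriv [CompleteSpace X] {f : ℝ → X} {K : NNReal}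
    (hf : LipschitzOnWith K f (Icc (0:ℝ) 1)) :
    IntegrableOn (deriv f) (Icc (0:ℝ) 1) volume := by
  refine Integrable.mono' (integrable_const (K : ℝ))
    (stronglyMeasurable_deriv f).aestronglyMeasurable ?_
  filter_upwards [ae_restrict_mem_Ioo] with s hs
  exact norm_deriv_le_of_lip hf hs

lemma intervalIntegrable_deriv [CompleteSpace X] {f : ℝ → X} {K : NNReal}
    (hf : LipschitzOnWith K f (Icc (0:ℝ) 1)) {a b : ℝ}
    (ha : 0 ≤ a) (hab : a ≤ b) (hb : b ≤ 1) :
    IntervalIntegrable (deriv f) volume a b := by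
  refine ((integrableOn_deriv hf).mono_set ?_).intervalIntegrable
  rw [uIcc_of_le hab]
  exact Icc_subset_Icc ha hb

lemma integrableOn_weight [CompleteSpace X] (w : X → ℝ) (hw_cont : Continuous w) (hw_pos : ∀ x, 0 < w x)
    {f : ℝ → X} {K : NNReal} (hf : LipschitzOnWith K f (Icc (0:ℝ) 1)) :
    IntegrableOn (fun s => w (f s) * ‖deriv f s‖) (Icc (0:ℝ) 1) volume := by
  have hfc : ContinuousOn f (Icc (0:ℝ) 1) := hf.continuousOn
  have hwc : ContinuousOn (fun s => w (f s)) (Icc (0:ℝ) 1) := hw_cont.comp_continuousOn hfc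
  obtain ⟨z, hz, hzmax⟩ := isCompact_Icc.exists_isMaxOn (⟨0, by norm_num⟩ : (Icc (0:ℝ) 1).Nonempty) hwc
  refine Integrable.mono' (integrable_const (w (f z) * K))
    ((hwc.aestronglyMeasurable measurableSet_Icc).mul
      (stronglyMeasurable_deriv f).norm.aestronglyMeasurable) ?_
  filter_upwards [ae_restrict_mem measurableSet_Icc, ae_restrict_mem_Ioo] with s hs hs'
  rw [Real.norm_eq_abs, abs_of_nonneg (mul_nonneg (hw_pos _).le (norm_nonneg _))]
  exact mul_le_mul (hzmax hs) (norm_deriv_le_of_lip hf hs') (norm_nonneg _) (hw_pos _).le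

lemma intervalIntegrable_weight [CompleteSpace X] (w : X → ℝ) (hw_cont : Continuous w) (hw_pos : ∀ x, 0 < w x)
    {f : ℝ → X} {K : NNReal} (hf : LipschitzOnWith K f (Icc (0:ℝ) 1)) {a b : ℝ}
    (ha : 0 ≤ a) (hab : a ≤ b) (hb : b ≤ 1) :
    IntervalIntegrable (fun s => w (f s) * ‖deriv f s‖) volume a b := by
  refine ((integrableOn_weight w hw_cont hw_pos hf).mono_set ?_).intervalIntegrable
  rw [uIcc_of_le hab]
  exact Icc_subset_Icc ha hb

/-- lengths are nonnegative, so `wDist` is bounded below by `0`. -/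
lemma wLengthOn_nonneg (w : X → ℝ) (hw_pos : ∀ x, 0 < w x) (γ : ℝ → X) {a b : ℝ} (hab : a ≤ b) :
    0 ≤ wLengthOn w γ a b :=
  intervalIntegral.integral_nonneg hab fun u _ => mul_nonneg (hw_pos _).le (norm_nonneg _)

/-- lower bound for the tail length of a path. -/
lemma length_lower [CompleteSpace X] (w : X → ℝ) (hw_cont : Continuous w) (hw_pos : ∀ x, 0 < w x)
    (γ : ℝ → X) {K : NNReal} (hK : LipschitzOnWith K γ (Icc (0:ℝ) 1))
    (hftc : ∀ s ∈ Icc (0:ℝ) 1, γ s = γ 0 + ∫ u in (0:ℝ)..s, deriv γ u)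
    {t m : ℝ} (ht : t ∈ Icc (0:ℝ) 1) (hm : 0 ≤ m)
    (hwm : ∀ s ∈ Icc t 1, m ≤ w (γ s)) :
    m * ‖γ 1 - γ t‖ ≤ wLengthOn w γ t 1 := by
  have hi1 : IntervalIntegrable (deriv γ) volume 0 t := intervalIntegrable_deriv hK le_rfl ht.1 ht.2
  have hi2 : IntervalIntegrable (deriv γ) volume t 1 := intervalIntegrable_deriv hK ht.1 ht.2 le_rfl
  have hsum := intervalIntegral.integral_add_adjacent_intervals hi1 hi2
  have h1 : (∫ u in t..(1:ℝ), deriv γ u) = γ 1 - γ t := by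
    have e1 := hftc 1 (by norm_num)
    have e2 := hftc t ht
    rw [e1, e2, ← hsum]; abel
  calc m * ‖γ 1 - γ t‖ = m * ‖∫ u in t..(1:ℝ), deriv γ u‖ := by rw [h1]
    _ ≤ m * ∫ u in t..(1:ℝ), ‖deriv γ u‖ := by
        exact mul_le_mul_of_nonneg_left (intervalIntegral.norm_integral_le_integral_norm ht.2) hm
    _ = ∫ u in t..(1:ℝ), m * ‖deriv γ u‖ := by rw [← intervalIntegral.integral_const_mul]
    _ ≤ ∫ u in t..(1:ℝ), w (γ u) * ‖deriv γ u‖ := by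
        refine intervalIntegral.integral_mono_on ht.2 (hi2.norm.const_mul m)
          (intervalIntegrable_weight w hw_cont hw_pos hK ht.1 ht.2 le_rfl) ?_
        intro u hu
        exact mul_le_mul_of_nonneg_right (hwm u hu) (norm_nonneg _)
    _ = wLengthOn w γ t 1 := rfl
/-- Concatenating an initial geodesic segment with a straight segment bounds `wDist`. -/
lemma concat_bound [CompleteSpace X] (Ω : Set X) (w : X → ℝ)
    (hw_cont : Continuous w) (hw_pos : ∀ x, 0 < w x)
    (x₀ : X) (γ : ℝ → X) {K : NNReal} (hK : LipschitzOnWith K γ (Icc (0:ℝ) 1))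
    (hdiff : ∀ᵐ s ∂(volume.restrict (Icc (0:ℝ) 1)), DifferentiableAt ℝ γ s)
    (hftc : ∀ s ∈ Icc (0:ℝ) 1, γ s = γ 0 + ∫ u in (0:ℝ)..s, deriv γ u)
    (hγ0 : γ 0 = x₀)
    (hΩγ : ∀ s ∈ Icc (0:ℝ) 1, γ s ∈ Ω)
    {t : ℝ} (ht : t ∈ Ioo (0:ℝ) 1) {x : X} {M : ℝ}
    (hseg : ∀ u ∈ Icc (0:ℝ) 1, γ t + u • (x - γ t) ∈ Ω)
    (hMw : ∀ u ∈ Icc (0:ℝ) 1, w (γ t + u • (x - γ t)) ≤ M) :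
    wDist Ω w x₀ x ≤ wLengthOn w γ 0 t + M * ‖x - γ t‖ := by
  obtain ⟨ht0, ht1⟩ := ht
  set v := x - γ t with hv
  set η : ℝ → X := fun s => if s ≤ 1/2 then γ (2*t*s) else γ t + (2*s-1) • v with hη
  have hη_left : ∀ s : ℝ, s ≤ 1/2 → η s = γ (2*t*s) := fun s hs => if_pos hs
  have hη_right : ∀ s : ℝ, 1/2 ≤ s → η s = γ t + (2*s-1) • v := by
    intro s hs
    rcases eq_or_lt_of_le hs with h | h
    · rw [← h]
      show (if (1/2:ℝ) ≤ 1/2 then γ (2*t*(1/2)) else γ t + (2*(1/2:ℝ)-1) • v)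
          = γ t + (2*(1/2:ℝ)-1) • v
      rw [if_pos le_rfl]
      have h1 : 2*t*(1/2:ℝ) = t := by ring
      have h2 : 2*(1/2:ℝ)-1 = 0 := by norm_num
      rw [h1, h2, zero_smul, add_zero]
    · show (if s ≤ 1/2 then γ (2*t*s) else γ t + (2*s-1) • v) = γ t + (2*s-1) • v
      rw [if_neg (not_le.2 h)]
  -- Lipschitz bound for η
  set C₀ : ℝ := 2*K + 2*‖v‖ with hC₀
  have hC₀0 : 0 ≤ C₀ := by positivity
  have p1 : ∀ a b : ℝ, 0 ≤ a → a ≤ b → b ≤ 1/2 → dist (η a) (η b) ≤ (2*K) * (b - a) := by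
    intro a b ha hab hb
    rw [hη_left a (hab.trans hb), hη_left b hb]
    have h1 : dist (γ (2*t*a)) (γ (2*t*b)) ≤ K * dist (2*t*a) (2*t*b) :=
      hK.dist_le_mul _ ⟨mul_nonneg (by positivity) ha, by nlinarith⟩ _
        ⟨mul_nonneg (by positivity) (ha.trans hab), by nlinarith⟩
    have h2 : dist (2*t*a) (2*t*b) = 2*t*(b-a) := by
      rw [Real.dist_eq, abs_of_nonpos (by nlinarith)]; ring
    rw [h2] at h1
    nlinarith [K.coe_nonneg,
      mul_nonneg (mul_nonneg K.coe_nonneg (sub_nonneg.2 hab)) (sub_nonneg.2 ht1.le)]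
  have p2 : ∀ a b : ℝ, 1/2 ≤ a → a ≤ b → dist (η a) (η b) ≤ (2*‖v‖) * (b - a) := by
    intro a b ha hab
    rw [hη_right a ha, hη_right b (ha.trans hab), dist_eq_norm]
    have e : (γ t + (2*a-1) • v) - (γ t + (2*b-1) • v) = ((2*a-1) - (2*b-1)) • v := by
      module
    rw [e, norm_smul, Real.norm_eq_abs, abs_of_nonpos (by linarith)]
    nlinarith [norm_nonneg v]
  have key : ∀ a ∈ Icc (0:ℝ) 1, ∀ b ∈ Icc (0:ℝ) 1, a ≤ b → dist (η a) (η b) ≤ C₀ * (b - a) := by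
    intro a ha b hb hab
    have hv0 := norm_nonneg v
    have hK0 := K.coe_nonneg
    rcases le_or_gt b (1/2) with h | h
    · have := p1 a b ha.1 hab h; nlinarith
    rcases le_or_gt (1/2) a with h' | h'
    · have := p2 a b h' hab; nlinarith
    · have h1 := p1 a (1/2) ha.1 h'.le le_rfl
      have h2 := p2 (1/2) b le_rfl h.le
      have h3 := dist_triangle (η a) (η (1/2)) (η b)
      nlinarith
  have hηK : LipschitzOnWith C₀.toNNReal η (Icc (0:ℝ) 1) := by
    apply LipschitzOnWith.of_dist_le'
    intro a ha b hb
    rcases le_total a b with h | h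
    · calc dist (η a) (η b) ≤ C₀ * (b - a) := key a ha b hb h
        _ ≤ C₀ * dist a b := by
            refine mul_le_mul_of_nonneg_left ?_ hC₀0
            rw [Real.dist_eq, abs_sub_comm]
            exact le_abs_self _
    · rw [dist_comm]
      calc dist (η b) (η a) ≤ C₀ * (a - b) := key b hb a ha h
        _ ≤ C₀ * dist a b := by
            refine mul_le_mul_of_nonneg_left ?_ hC₀0
            rw [Real.dist_eq]
            exact le_abs_self _
  -- the bad (non-differentiability) set and its preimage
  have h2t : (2*t) ≠ 0 := by positivity
  set B : Set ℝ := {s | ¬ DifferentiableAt ℝ γ s} ∩ Icc 0 1 with hB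
  have hB0 : volume B = 0 := by
    have h := ae_iff.mp hdiff
    calc volume B = (volume.restrict (Icc (0:ℝ) 1)) {s | ¬ DifferentiableAt ℝ γ s} :=
          (Measure.restrict_apply' measurableSet_Icc).symm
      _ = 0 := h
  set B' : Set ℝ := (fun u => 2*t*u) ⁻¹' B with hB'
  have hB'0 : volume B' = 0 := by
    obtain ⟨N, hBN, hNm, hN0⟩ := exists_measurable_superset_of_null hB0
    refine le_antisymm ?_ zero_le
    calc volume B' ≤ volume ((fun u => (2*t) * u) ⁻¹' N) :=
          measure_mono fun u hu => hBN hu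
      _ = ENNReal.ofReal |(2*t)⁻¹| * volume N := Real.volume_preimage_mul_left h2t N
      _ = 0 := by rw [hN0, mul_zero]
  have hgood : ∀ᵐ u : ℝ, u ∉ B' ∧ u ≠ 1/2 := by
    have h1 : ∀ᵐ u : ℝ, u ∉ B' := measure_eq_zero_iff_ae_notMem.mp hB'0
    have h2 : ∀ᵐ u : ℝ, u ≠ (1/2:ℝ) := by
      have h0 : volume ({(1/2:ℝ)} : Set ℝ) = 0 := measure_singleton _
      filter_upwards [measure_eq_zero_iff_ae_notMem.mp h0] with u hu using hu
    exact h1.and h2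
  have hmem2t : ∀ u : ℝ, 0 ≤ u → u ≤ 1/2 → (2*t*u) ∈ Icc (0:ℝ) 1 := by
    intro u h0 h1'
    exact ⟨by positivity, by nlinarith⟩
  have hderiv_left : ∀ u : ℝ, u ∈ Ico (0:ℝ) (1/2) → u ∉ B' →
      HasDerivAt η ((2*t) • deriv γ (2*t*u)) u := by
    intro u hu hB'u
    have hd : DifferentiableAt ℝ γ (2*t*u) := by
      by_contra hc
      exact hB'u ⟨hc, hmem2t u hu.1 hu.2.le⟩
    have hc : HasDerivAt (fun s : ℝ => 2*t*s) (2*t) u := by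
      simpa using (hasDerivAt_id u).const_mul (2*t)
    have hcomp : HasDerivAt (fun s : ℝ => γ (2*t*s)) ((2*t) • deriv γ (2*t*u)) u := by
      have := HasDerivAt.scomp u hd.hasDerivAt hc
      exact this
    refine hcomp.congr_of_eventuallyEq ?_
    filter_upwards [Iio_mem_nhds hu.2] with s hs
    exact hη_left s hs.le
  have hderiv_right : ∀ u : ℝ, 1/2 < u → HasDerivAt η ((2:ℝ) • v) u := by
    intro u hu
    have ha : HasDerivAt (fun s : ℝ => (2*s - 1)) 2 u := by
      simpa using ((hasDerivAt_id u).const_mul (2:ℝ)).sub_const 1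
    have hb : HasDerivAt (fun s : ℝ => γ t + (2*s-1) • v) ((2:ℝ) • v) u :=
      (ha.smul_const v).const_add (γ t)
    refine hb.congr_of_eventuallyEq ?_
    filter_upwards [Ioi_mem_nhds hu] with s hs
    exact hη_right s hs.le
  have hdiff_η : ∀ᵐ u ∂(volume.restrict (Icc (0:ℝ) 1)), DifferentiableAt ℝ η u := by
    filter_upwards [ae_restrict_mem_Ioo, ae_mono Measure.restrict_le_self hgood] with u hu hg
    rcases lt_or_gt_of_ne hg.2 with h | h
    · exact (hderiv_left u ⟨hu.1.le, h⟩ hg.1).differentiableAt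
    · exact (hderiv_right u h).differentiableAt
  have hηint : ∀ a b : ℝ, 0 ≤ a → a ≤ b → b ≤ 1 → IntervalIntegrable (deriv η) volume a b :=
    fun a b ha hab hb => intervalIntegrable_deriv hηK ha hab hb
  have hwint : ∀ a b : ℝ, 0 ≤ a → a ≤ b → b ≤ 1 →
      IntervalIntegrable (fun s => w (η s) * ‖deriv η s‖) volume a b :=
    fun a b ha hab hb => intervalIntegrable_weight w hw_cont hw_pos hηK ha hab hb
  have hhalf : 2*t*(1/2:ℝ) = t := by ring
  have I₁ : ∀ s : ℝ, s ∈ Icc (0:ℝ) (1/2) →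
      (∫ u in (0:ℝ)..s, deriv η u) = γ (2*t*s) - γ 0 := by
    intro s hs
    have h2ts : 2*t*s ∈ Icc (0:ℝ) 1 := hmem2t s hs.1 hs.2
    calc (∫ u in (0:ℝ)..s, deriv η u)
        = ∫ u in (0:ℝ)..s, (2*t) • deriv γ (2*t*u) := by
          apply intervalIntegral.integral_congr_ae
          filter_upwards [hgood] with u hg hu
          rw [uIoc_of_le hs.1] at hu
          have hu' : u ∈ Ico (0:ℝ) (1/2) := ⟨hu.1.le, lt_of_le_of_ne (hu.2.trans hs.2) hg.2⟩
          exact (hderiv_left u hu' hg.1).deriv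
      _ = (2*t) • ∫ u in (0:ℝ)..s, deriv γ (2*t*u) := intervalIntegral.integral_smul _ _
      _ = ∫ u in (2*t*0)..(2*t*s), deriv γ u :=
          intervalIntegral.smul_integral_comp_mul_left _ _
      _ = ∫ u in (0:ℝ)..(2*t*s), deriv γ u := by rw [mul_zero]
      _ = γ (2*t*s) - γ 0 := by rw [hftc (2*t*s) h2ts]; abel
  have hη0 : η 0 = γ 0 := by rw [hη_left 0 (by norm_num), mul_zero]
  have hftcη : ∀ s ∈ Icc (0:ℝ) 1, η s = η 0 + ∫ u in (0:ℝ)..s, deriv η u := by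
    intro s hs
    rcases le_or_gt s (1/2) with h | h
    · rw [hη_left s h, hη0, I₁ s ⟨hs.1, h⟩]; abel
    · have hsplit := intervalIntegral.integral_add_adjacent_intervals
        (hηint 0 (1/2) le_rfl (by norm_num) (by norm_num))
        (hηint (1/2) s (by norm_num) h.le hs.2)
      have hmid : (∫ u in (0:ℝ)..(1/2:ℝ), deriv η u) = γ t - γ 0 := by
        rw [I₁ (1/2) ⟨by norm_num, le_rfl⟩, hhalf]
      have htail : (∫ u in (1/2:ℝ)..s, deriv η u) = (s - 1/2) • ((2:ℝ) • v) := by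
        rw [intervalIntegral.integral_congr_ae (g := fun _ => (2:ℝ) • v) ?_,
          intervalIntegral.integral_const]
        filter_upwards with u hu
        rw [uIoc_of_le h.le] at hu
        exact (hderiv_right u hu.1).deriv
      rw [hη_right s h.le, hη0, ← hsplit, hmid, htail, smul_smul]
      have h4 : (s - 1/2) * 2 = 2*s - 1 := by ring
      rw [h4]; abel
  have hΩη : ∀ s ∈ Icc (0:ℝ) 1, η s ∈ Ω := by
    intro s hs
    rcases le_or_gt s (1/2) with h | h
    · rw [hη_left s h]; exact hΩγ _ (hmem2t s hs.1 h)
    · rw [hη_right s h.le]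
      exact hseg (2*s-1) ⟨by linarith, by linarith [hs.2]⟩
  have hη0' : η 0 = x₀ := by rw [hη0, hγ0]
  have hη1 : η 1 = x := by
    rw [hη_right 1 (by norm_num)]
    have h5 : 2*(1:ℝ)-1 = 1 := by norm_num
    rw [h5, one_smul, hv]
    abel
  have hηpath : IsWPath Ω x₀ x η :=
    ⟨⟨C₀.toNNReal, hηK⟩, hdiff_η, hftcη, hη0', hη1, hΩη⟩
  have hwd : wDist Ω w x₀ x ≤ wLengthOn w η 0 1 := by
    apply csInf_le
    · refine ⟨0, ?_⟩
      rintro y ⟨σ, hσ, rfl⟩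
      exact wLengthOn_nonneg w hw_pos σ zero_le_one
    · exact ⟨η, hηpath, rfl⟩
  have hsplitw := intervalIntegral.integral_add_adjacent_intervals
    (hwint 0 (1/2) le_rfl (by norm_num) (by norm_num))
    (hwint (1/2) 1 (by norm_num) (by norm_num) le_rfl)
  have hleft : (∫ u in (0:ℝ)..(1/2:ℝ), w (η u) * ‖deriv η u‖) = wLengthOn w γ 0 t := by
    have hc : (∫ u in (0:ℝ)..(1/2:ℝ), w (η u) * ‖deriv η u‖)
        = ∫ u in (0:ℝ)..(1/2:ℝ), (2*t) * (w (γ (2*t*u)) * ‖deriv γ (2*t*u)‖) := by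
      apply intervalIntegral.integral_congr_ae
      filter_upwards [hgood] with u hg hu
      rw [uIoc_of_le (by norm_num : (0:ℝ) ≤ 1/2)] at hu
      have hu' : u ∈ Ico (0:ℝ) (1/2) := ⟨hu.1.le, lt_of_le_of_ne hu.2 hg.2⟩
      rw [hη_left u hu'.2.le, (hderiv_left u hu' hg.1).deriv, norm_smul,
        Real.norm_eq_abs, abs_of_pos (by positivity : (0:ℝ) < 2*t)]
      ring
    rw [hc, intervalIntegral.integral_const_mul]
    have h6 := intervalIntegral.smul_integral_comp_mul_left
      (a := 0) (b := 1/2) (fun u => w (γ u) * ‖deriv γ u‖) (2*t)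
    rw [smul_eq_mul] at h6
    rw [h6, mul_zero, hhalf]
    rfl
  have hright : (∫ u in (1/2:ℝ)..1, w (η u) * ‖deriv η u‖) ≤ M * ‖v‖ := by
    have hb : (∫ u in (1/2:ℝ)..1, w (η u) * ‖deriv η u‖)
        ≤ ∫ u in (1/2:ℝ)..1, M * (2*‖v‖) := by
      refine intervalIntegral.integral_mono_ae_restrict (by norm_num)
        (hwint (1/2) 1 (by norm_num) (by norm_num) le_rfl) intervalIntegrable_const ?_
      filter_upwards [ae_restrict_mem measurableSet_Icc,
        ae_mono Measure.restrict_le_self hgood] with u hu hg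
      have hu2 : 1/2 < u := lt_of_le_of_ne hu.1 (Ne.symm hg.2)
      rw [hη_right u hu2.le, (hderiv_right u hu2).deriv, norm_smul, Real.norm_eq_abs]
      have habs : |(2:ℝ)| = 2 := by norm_num
      rw [habs]
      have hp : (2*u - 1) ∈ Icc (0:ℝ) 1 := ⟨by linarith, by linarith [hu.2]⟩
      exact mul_le_mul_of_nonneg_right (hMw _ hp) (by positivity)
    calc (∫ u in (1/2:ℝ)..1, w (η u) * ‖deriv η u‖)
        ≤ ∫ u in (1/2:ℝ)..1, M * (2*‖v‖) := hb
      _ = M * ‖v‖ := by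
          rw [intervalIntegral.integral_const, smul_eq_mul]; ring
  calc wDist Ω w x₀ x ≤ wLengthOn w η 0 1 := hwd
    _ = (∫ u in (0:ℝ)..(1/2:ℝ), w (η u) * ‖deriv η u‖)
        + ∫ u in (1/2:ℝ)..1, w (η u) * ‖deriv η u‖ := hsplitw.symm
    _ ≤ wLengthOn w γ 0 t + M * ‖v‖ := add_le_add (le_of_eq hleft) hright
set_option maxHeartbeats 1000000 in
/-- a `w`-geodesic meets the `w`-sphere it terminates on
"orthogonally": the distance from `γ(t)` to the sphere is asymptotically
`‖γ(t) - γ(1)‖` as `t → 1⁻`. -/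
theorem stmt_13 (Ω : Set X) (hΩo : IsOpen Ω)
    (w : X → ℝ) (hw_cont : Continuous w) (hw_pos : ∀ x, 0 < w x)
    (x₀ : X) (hx₀ : x₀ ∈ Ω) (γ : ℝ → X)
    (hpath : IsWPath Ω x₀ (γ 1) γ)
    -- `γ` is a geodesic: it realises the inner distance on every initial segment
    (hgeo : ∀ t ∈ Icc (0:ℝ) 1, wDist Ω w x₀ (γ t) = wLengthOn w γ 0 t)
    (hne : ∀ t ∈ Ico (0:ℝ) 1, γ t ≠ γ 1)
    (r : ℝ) (hr : r = wDist Ω w x₀ (γ 1)) :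
    Tendsto
      (fun t => infDist (γ t) {x ∈ Ω | wDist Ω w x₀ x = r} / ‖γ t - γ 1‖)
      (nhdsWithin 1 (Iio 1)) (nhds 1) := by
  by_cases hX : CompleteSpace X
  case neg =>
    exfalso
    obtain ⟨-, -, hftc, -, -, -⟩ := hpath
    have hzero : ∀ (μ : Measure ℝ), (∫ s, deriv γ s ∂μ) = 0 := fun μ => by
      rw [MeasureTheory.integral_def]; exact dif_neg hX
    have h0 : (∫ s in (0:ℝ)..(1:ℝ), deriv γ s) = 0 := by
      show (∫ s in Ioc (0:ℝ) 1, deriv γ s) - (∫ s in Ioc (1:ℝ) 0, deriv γ s) = 0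
      rw [hzero, hzero, sub_zero]
    have h1 := hftc 1 (by norm_num)
    rw [h0, add_zero] at h1
    exact hne 0 ⟨le_rfl, one_pos⟩ h1.symm
  case pos =>
  obtain ⟨⟨K, hK⟩, hdiff, hftc, hγ0, -, hΩγ⟩ := hpath
  set S := {x ∈ Ω | wDist Ω w x₀ x = r} with hS
  have hγ1Ω : γ 1 ∈ Ω := hΩγ 1 (by norm_num)
  have hγ1S : γ 1 ∈ S := ⟨hγ1Ω, hr.symm⟩
  have hSne : S.Nonempty := ⟨γ 1, hγ1S⟩
  have hrlen : r = wLengthOn w γ 0 1 := by rw [hr, hgeo 1 (by norm_num)]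
  set c := w (γ 1) with hc
  have hc0 : 0 < c := hw_pos _
  rw [Metric.tendsto_nhds]
  intro ε hε
  set ε' : ℝ := min (ε/4) (1/2) with hε'
  have hε'0 : 0 < ε' := lt_min (by positivity) (by norm_num)
  have hε'le : ε' ≤ 1/2 := min_le_right _ _
  have hε'ε : ε' ≤ ε/4 := min_le_left _ _
  set m := c * (1 - ε') with hm
  set M := c * (1 + ε') with hM
  have hm0 : 0 < m := by nlinarith
  have hM0 : 0 < M := by nlinarith
  have hmM : m ≤ M := by nlinarith
  obtain ⟨ρ, hρ0, hρΩ⟩ := Metric.isOpen_iff.mp hΩo (γ 1) hγ1Ω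
  obtain ⟨ρ₂, hρ₂0, hρ₂⟩ := Metric.continuousAt_iff.mp hw_cont.continuousAt (c*ε') (by positivity)
  set δ := min ρ ρ₂ / 4 with hδ
  have hδ0 : 0 < δ := div_pos (lt_min hρ0 hρ₂0) (by norm_num)
  have hball : ∀ y : X, dist y (γ 1) ≤ 2*δ → (y ∈ Ω ∧ m ≤ w y ∧ w y ≤ M) := by
    intro y hy
    have hmin : 0 < min ρ ρ₂ := lt_min hρ0 hρ₂0
    have h1 : dist y (γ 1) < ρ := by
      have h := min_le_left ρ ρ₂
      rw [hδ] at hy; nlinarith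
    have h2 : dist y (γ 1) < ρ₂ := by
      have h := min_le_right ρ ρ₂
      rw [hδ] at hy; nlinarith
    have h3 := hρ₂ h2
    rw [Real.dist_eq] at h3
    obtain ⟨h3l, h3r⟩ := abs_lt.mp h3
    refine ⟨hρΩ (mem_ball.mpr h1), ?_, ?_⟩
    · rw [hm]; nlinarith
    · rw [hM]; nlinarith
  have hL1 : max (1/2 : ℝ) (1 - δ/(K+1)) < 1 := by
    apply max_lt (by norm_num)
    have : (0:ℝ) < δ/(K+1) := by positivity
    linarith
  filter_upwards [Ioo_mem_nhdsLT_of_mem (⟨hL1, le_rfl⟩ : (1:ℝ) ∈ Ioc (max (1/2:ℝ) (1 - δ/(K+1))) 1)]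
    with τ hτ
  obtain ⟨hτl, hτ1⟩ := hτ
  have hτhalf : 1/2 < τ := lt_of_le_of_lt (le_max_left _ _) hτl
  have hτ0 : 0 < τ := by linarith
  have hτmem : τ ∈ Icc (0:ℝ) 1 := ⟨hτ0.le, hτ1.le⟩
  have hKd : (K:ℝ)*(1-τ) < δ := by
    have h1 : 1 - δ/(K+1) < τ := lt_of_le_of_lt (le_max_right _ _) hτl
    have hK0 : (0:ℝ) ≤ K := K.coe_nonneg
    have h2 : 1 - τ < δ/(K+1) := by linarith
    calc (K:ℝ)*(1-τ) ≤ ((K:ℝ)+1)*(1-τ) :=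
          mul_le_mul_of_nonneg_right (by linarith) (by linarith)
      _ < ((K:ℝ)+1)*(δ/((K:ℝ)+1)) := mul_lt_mul_of_pos_left h2 (by positivity)
      _ = δ := by field_simp
  have hγτclose : ∀ s ∈ Icc τ 1, ‖γ s - γ 1‖ < δ := by
    intro s hs
    have hd := hK.dist_le_mul s ⟨le_trans hτ0.le hs.1, hs.2⟩ 1 ⟨by norm_num, le_rfl⟩
    rw [dist_eq_norm, Real.dist_eq] at hd
    calc ‖γ s - γ 1‖ ≤ K * |s-1| := hd
      _ = K * (1-s) := by rw [abs_of_nonpos (by linarith [hs.2])]; ring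
      _ ≤ K * (1-τ) := mul_le_mul_of_nonneg_left (by linarith [hs.1]) K.coe_nonneg
      _ < δ := hKd
  have hγτδ : ‖γ τ - γ 1‖ < δ := hγτclose τ ⟨le_rfl, hτ1.le⟩
  have hγτne : γ τ ≠ γ 1 := hne τ ⟨hτ0.le, hτ1⟩
  have hnorm0 : 0 < ‖γ τ - γ 1‖ := by
    rw [norm_pos_iff, sub_ne_zero]; exact hγτne
  have hwm : ∀ s ∈ Icc τ 1, m ≤ w (γ s) := fun s hs =>
    (hball (γ s) (by rw [dist_eq_norm]; linarith [hγτclose s hs])).2.1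
  have htail : m * ‖γ 1 - γ τ‖ ≤ wLengthOn w γ τ 1 :=
    length_lower w hw_cont hw_pos γ hK hftc hτmem hm0.le hwm
  have hsplit : wLengthOn w γ 0 1 = wLengthOn w γ 0 τ + wLengthOn w γ τ 1 :=
    (intervalIntegral.integral_add_adjacent_intervals
      (intervalIntegrable_weight w hw_cont hw_pos hK le_rfl hτ0.le hτ1.le)
      (intervalIntegrable_weight w hw_cont hw_pos hK hτ0.le hτ1.le le_rfl)).symm
  have hkey : ∀ y ∈ S, (m/M) * ‖γ τ - γ 1‖ ≤ dist (γ τ) y := by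
    intro y hy
    rcases le_or_gt δ (dist (γ τ) y) with h | h
    · calc (m/M)*‖γ τ - γ 1‖ ≤ 1 * ‖γ τ - γ 1‖ := by
            refine mul_le_mul_of_nonneg_right ?_ (norm_nonneg _)
            rw [div_le_one hM0]; exact hmM
        _ = ‖γ τ - γ 1‖ := one_mul _
        _ ≤ δ := hγτδ.le
        _ ≤ dist (γ τ) y := h
    · have hdy : ‖y - γ τ‖ < δ := by
        rw [← dist_eq_norm, dist_comm]; exact h
      have hsegball : ∀ u ∈ Icc (0:ℝ) 1, dist (γ τ + u • (y - γ τ)) (γ 1) ≤ 2*δ := by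
        intro u hu
        have he : γ τ + u • (y - γ τ) - γ 1 = (γ τ - γ 1) + u • (y - γ τ) := by abel
        rw [dist_eq_norm, he]
        calc ‖(γ τ - γ 1) + u • (y - γ τ)‖ ≤ ‖γ τ - γ 1‖ + ‖u • (y - γ τ)‖ := norm_add_le _ _
          _ ≤ δ + δ := by
              refine add_le_add hγτδ.le ?_
              rw [norm_smul, Real.norm_eq_abs, abs_of_nonneg hu.1]
              nlinarith [hu.2, norm_nonneg (y - γ τ)]
          _ = 2*δ := by ring
      have hconc := concat_bound Ω w hw_cont hw_pos x₀ γ hK hdiff hftc hγ0 hΩγ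
        (⟨hτ0, hτ1⟩ : τ ∈ Ioo (0:ℝ) 1) (x := y) (M := M)
        (fun u hu => (hball _ (hsegball u hu)).1)
        (fun u hu => (hball _ (hsegball u hu)).2.2)
      have h1 : r ≤ wLengthOn w γ 0 τ + M * ‖y - γ τ‖ := by rw [← hy.2]; exact hconc
      have h2 : wLengthOn w γ τ 1 ≤ M * ‖y - γ τ‖ := by
        rw [hrlen, hsplit] at h1; linarith
      have h3 : m * ‖γ 1 - γ τ‖ ≤ M * ‖y - γ τ‖ := le_trans htail h2
      rw [dist_eq_norm]
      have hnn : ‖γ τ - y‖ = ‖y - γ τ‖ := norm_sub_rev _ _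
      have hnn2 : ‖γ 1 - γ τ‖ = ‖γ τ - γ 1‖ := norm_sub_rev _ _
      rw [hnn, div_mul_eq_mul_div, div_le_iff₀ hM0]
      calc m * ‖γ τ - γ 1‖ = m * ‖γ 1 - γ τ‖ := by rw [hnn2]
        _ ≤ M * ‖y - γ τ‖ := h3
        _ = ‖y - γ τ‖ * M := mul_comm _ _
  have hub : infDist (γ τ) S ≤ ‖γ τ - γ 1‖ := by
    have h := infDist_le_dist_of_mem (x := γ τ) hγ1S
    rwa [dist_eq_norm] at h
  have hlb : (m/M) * ‖γ τ - γ 1‖ ≤ infDist (γ τ) S := by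
    by_contra hcon
    push_neg at hcon
    obtain ⟨y, hyS, hyd⟩ := (infDist_lt_iff hSne).mp hcon
    exact absurd hyd (not_lt.2 (hkey y hyS))
  have hratio1 : infDist (γ τ) S / ‖γ τ - γ 1‖ ≤ 1 := by
    rw [div_le_one hnorm0]; exact hub
  have hratio2 : m/M ≤ infDist (γ τ) S / ‖γ τ - γ 1‖ := by
    rw [le_div_iff₀ hnorm0]; exact hlb
  have hmM2 : 1 - m/M ≤ 2*ε' := by
    have h7 : m / M = (1-ε')/(1+ε') := by
      rw [hm, hM, mul_div_mul_left _ _ hc0.ne']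
    have h8 : (0:ℝ) < 1 + ε' := by linarith
    have h9 : 1 - 2*ε' ≤ (1-ε')/(1+ε') := by
      rw [le_div_iff₀ h8]; nlinarith
    rw [h7]; linarith
  rw [Real.dist_eq, abs_of_nonpos (by linarith)]
  have h10 : 2*ε' < ε := by linarith
  linarith
end
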